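/- Let m ≥ 5 be odd, h = (m−1)/2, and A = {1, 2, …, 2^{h−1} − 1}. For any i ∈ A and any odd j ∈ A, the 2-cyclotomic cosets modulo 2^m − 1 satisfy: C_{i+2^h} ∩ C_j = C_j if there exist s ∈ {2, 3, …, h−2} and an odd integer i₁ with 1 ≤ i₁ ≤ 2^{h−1−s} − 1 such that i = 2^s·i₁ and j = i₁ + 2^{h−s}; otherwise C_{i+2^h} ∩ C_j = ∅. -/

import Mathlib

/-- The 2-cyclotomic coset of i modulo v:
    C_i = {i·2^s mod v : s = 0, 1, 2, …} ⊆ Z_v. -/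
def cosetC (v i : ℕ) : Set ℕ := {x | ∃ s : ℕ, x = i * 2 ^ s % v}

lemma pow_m_modeq (m : ℕ) : (2:ℕ)^m ≡ 1 [MOD 2^m - 1] := by
  have h1 : (1:ℕ) ≤ 2^m := Nat.one_le_two_pow
  exact ((Nat.modEq_iff_dvd' h1).mpr dvd_rfl).symm

lemma coset_mul_pow (m a s : ℕ) (hm : 0 < m) :
    cosetC (2^m - 1) (a * 2^s) = cosetC (2^m - 1) a := by
  obtain ⟨k, rfl⟩ : ∃ k, m = k + 1 := ⟨m - 1, (Nat.succ_pred_eq_of_pos hm).symm⟩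
  have hmod := pow_m_modeq (k+1)
  ext x
  constructor
  · rintro ⟨u, rfl⟩
    exact ⟨s + u, by rw [mul_assoc, ← pow_add]⟩
  · rintro ⟨u, rfl⟩
    refine ⟨u + s * k, ?_⟩
    have hexp : a * 2^s * 2^(u + s*k) = a * 2^u * (2^(k+1))^s := by
      rw [mul_assoc, ← pow_add, ← pow_mul, mul_assoc, ← pow_add]
      ring_nf
    rw [hexp]
    have : a * 2^u * (2^(k+1))^s ≡ a * 2^u * 1 [MOD 2^(k+1) - 1] :=
      Nat.ModEq.mul_left _ ((hmod.pow s).trans (by rw [one_pow]))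
    rw [mul_one] at this
    exact this.symm

lemma coset_shift_modeq (m v j c : ℕ) (hv : v = 2^m - 1) (hm : 0 < m) :
    j * 2^c ≡ j * 2^(c % m) [MOD v] := by
  subst hv
  have hdm : m * (c / m) + c % m = c := Nat.div_add_mod c m
  have he : (2:ℕ)^c = (2^m)^(c/m) * 2^(c % m) := by
    rw [← pow_mul, ← pow_add, hdm]
  rw [he, ← mul_assoc, mul_comm j ((2^m)^(c/m)), mul_assoc]
  have h1 : ((2:ℕ)^m)^(c/m) ≡ 1 [MOD 2^m - 1] :=
    ((pow_m_modeq m).pow _).trans (by rw [one_pow])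
  calc (2^m)^(c/m) * (j * 2^(c % m)) ≡ 1 * (j * 2^(c % m)) [MOD 2^m - 1] :=
        h1.mul_right _
    _ = j * 2^(c % m) := one_mul _
/-- Let m ≥ 5 be odd, h = (m−1)/2, and A = {1, …, 2^{h−1} − 1}. For i ∈ A and
odd j ∈ A: C_{i+2^h} ∩ C_j = C_j if i = 2^s·i₁ and j = i₁ + 2^{h−s} for some
s ∈ {2, …, h−2} and odd i₁ with 1 ≤ i₁ ≤ 2^{h−1−s} − 1; otherwise
C_{i+2^h} ∩ C_j = ∅ (cosets modulo 2^m − 1). -/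
theorem stmt8 (m h : ℕ) (hmo : Odd m) (hm5 : 5 ≤ m) (hh : h = (m - 1) / 2)
    (i j : ℕ) (hi1 : 1 ≤ i) (hi2 : i ≤ 2 ^ (h - 1) - 1)
    (hj1 : 1 ≤ j) (hj2 : j ≤ 2 ^ (h - 1) - 1) (hjodd : Odd j) :
    ((∃ s : ℕ, 2 ≤ s ∧ s ≤ h - 2 ∧ ∃ i₁ : ℕ, Odd i₁ ∧ 1 ≤ i₁ ∧
        i₁ ≤ 2 ^ (h - 1 - s) - 1 ∧ i = 2 ^ s * i₁ ∧ j = i₁ + 2 ^ (h - s)) →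
      cosetC (2 ^ m - 1) (i + 2 ^ h) ∩ cosetC (2 ^ m - 1) j =
        cosetC (2 ^ m - 1) j) ∧
    (¬ (∃ s : ℕ, 2 ≤ s ∧ s ≤ h - 2 ∧ ∃ i₁ : ℕ, Odd i₁ ∧ 1 ≤ i₁ ∧
        i₁ ≤ 2 ^ (h - 1 - s) - 1 ∧ i = 2 ^ s * i₁ ∧ j = i₁ + 2 ^ (h - s)) →
      cosetC (2 ^ m - 1) (i + 2 ^ h) ∩ cosetC (2 ^ m - 1) j = ∅) := by
  obtain ⟨k, hk⟩ := hmo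
  have hmh : m = 2 * h + 1 := by omega
  have hh2 : 2 ≤ h := by omega
  have hmod := pow_m_modeq m
  -- numeric atoms
  have p1 : 2^h = 2 * 2^(h-1) := by
    rw [← pow_succ']; congr 1; omega
  have p2 : 2^(h+1) = 2 * 2^h := by rw [pow_succ]; ring
  have p3 : 2^(h+1) < 2^m := Nat.pow_lt_pow_right one_lt_two (by omega)
  have p0 : 1 ≤ 2^(h-1) := Nat.one_le_two_pow
  have hi2h : i + 2^h < 2^m - 1 := by omega
  constructor
  · rintro ⟨s, hs2, hsh, i₁, hoi, h11, h12, hieq, hjeq⟩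
    have hsh' : s ≤ h := by omega
    have key : i + 2^h = j * 2^s := by
      rw [hieq, hjeq, add_mul, ← pow_add, Nat.sub_add_cancel hsh']
      ring
    rw [key, coset_mul_pow m j s (by omega)]
    exact Set.inter_self _
  · intro hne
    rw [Set.eq_empty_iff_forall_notMem]
    rintro x ⟨⟨a, ha⟩, ⟨b, hb⟩⟩
    have h0 : (i + 2^h) * 2^a ≡ j * 2^b [MOD 2^m - 1] := ha.symm.trans hb
    have h2 : i + 2^h ≡ j * 2^(b + a*(m-1)) [MOD 2^m - 1] := by
      have e1 : (i + 2^h) * 2^a * 2^(a*(m-1)) = (i + 2^h) * (2^m)^a := by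
        rw [mul_assoc, ← pow_add, ← pow_mul]
        congr 2
        have hm1 : m - 1 + 1 = m := by omega
        calc a + a * (m-1) = a * ((m-1) + 1) := by ring
          _ = m * a := by rw [hm1]; ring
      have e2 : j * 2^b * 2^(a*(m-1)) = j * 2^(b + a*(m-1)) := by
        rw [mul_assoc, ← pow_add]
      have h1 : (i + 2^h) * (2^m)^a ≡ j * 2^(b + a*(m-1)) [MOD 2^m - 1] := by
        rw [← e1, ← e2]; exact h0.mul_right _
      have h1' : (i + 2^h) * 1 ≡ (i + 2^h) * (2^m)^a [MOD 2^m - 1] :=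
        Nat.ModEq.mul_left _ (((pow_m_modeq m).pow a).trans (by rw [one_pow])).symm
      rw [mul_one] at h1'
      exact h1'.trans h1
    obtain ⟨t, htm, h4⟩ : ∃ t, t < m ∧ (i + 2^h ≡ j * 2^t [MOD 2^m - 1]) :=
      ⟨(b + a*(m-1)) % m, Nat.mod_lt _ (by omega),
        h2.trans (coset_shift_modeq m _ j _ rfl (by omega))⟩
    by_cases hcase : t ≤ h + 2
    · -- no-wraparound case
      have hjtb : j * 2^t ≤ (2^(h-1) - 1) * 2^(h+2) :=
        Nat.mul_le_mul hj2 (Nat.pow_le_pow_right (by norm_num) (by omega))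
      have e3 : (2^(h-1) - 1) * 2^(h+2) = 2^m - 2^(h+2) := by
        rw [tsub_mul, one_mul, ← pow_add, show h - 1 + (h+2) = m from by omega]
      have p5 : 2 ≤ 2^(h+2) := by
        have : (2:ℕ)^1 ≤ 2^(h+2) := Nat.pow_le_pow_right (by norm_num) (by omega)
        simpa using this
      have hjtv : j * 2^t < 2^m - 1 := by omega
      have heq : i + 2^h = j * 2^t := by
        have := h4
        rwa [Nat.ModEq, Nat.mod_eq_of_lt hi2h, Nat.mod_eq_of_lt hjtv] at this
      have hth : t ≤ h - 1 := by
        by_contra hcc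
        push_neg at hcc
        rcases Nat.lt_or_ge t (h+1) with h' | h'
        · have ht : t = h := by omega
          rw [ht] at heq
          have hd : 2^h ∣ i + 2^h := heq ▸ dvd_mul_left _ _
          have hdi : 2^h ∣ i := (Nat.dvd_add_iff_left dvd_rfl).mpr hd
          have := Nat.le_of_dvd (by omega) hdi
          omega
        · have q1 : 2^(h+1) ≤ 2^t := Nat.pow_le_pow_right (by norm_num) h'
          have q2 : 2^t ≤ j * 2^t := Nat.le_mul_of_pos_left _ (by omega)
          omega
      have h2t : 2^t ∣ i := by
        have hd : 2^t ∣ i + 2^h := heq ▸ dvd_mul_left _ _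
        have hdh : (2:ℕ)^t ∣ 2^h := pow_dvd_pow 2 (by omega)
        exact (Nat.dvd_add_iff_left hdh).mpr hd
      obtain ⟨i₁, hi₁⟩ := h2t
      have hpt : (0:ℕ) < 2^t := Nat.pow_pos (by norm_num)
      have hji : j = i₁ + 2^(h-t) := by
        have e4 : 2^t * (i₁ + 2^(h-t)) = 2^t * j := by
          rw [mul_add, ← hi₁, ← pow_add, show t + (h - t) = h from by omega, heq]
          ring
        exact (Nat.eq_of_mul_eq_mul_left hpt e4).symm
      have hi₁pos : 1 ≤ i₁ := by
        rcases Nat.eq_zero_or_pos i₁ with h' | h'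
        · rw [h'] at hi₁; omega
        · exact h'
      have hi₁lt : i₁ < 2^(h-1-t) := by
        have e5 : 2^t * i₁ < 2^t * 2^(h-1-t) := by
          rw [← pow_add, show t + (h-1-t) = h - 1 from by omega, ← hi₁]; omega
        exact Nat.lt_of_mul_lt_mul_left e5
      have hth2 : t ≤ h - 2 := by
        by_contra hcc
        have e6 : h - 1 - t = 0 := by omega
        rw [e6, pow_zero] at hi₁lt; omega
      have ht2 : 2 ≤ t := by
        by_contra hcc
        push_neg at hcc
        have : 2^(h-1) ≤ 2^(h-t) := Nat.pow_le_pow_right (by norm_num) (by omega)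
        omega
      have hoddi₁ : Odd i₁ := by
        have e7 : (2:ℕ) ∣ 2^(h-t) := dvd_pow_self 2 (by omega : h - t ≠ 0)
        obtain ⟨k'', hk''⟩ := e7
        rw [Nat.odd_iff] at hjodd ⊢
        omega
      exact hne ⟨t, ht2, hth2, i₁, hoddi₁, hi₁pos, by omega, hi₁, hji⟩
    · -- wraparound case: contradiction
      push_neg at hcase
      obtain ⟨u, hu⟩ : ∃ u, u = m - t := ⟨_, rfl⟩
      have hu1 : 1 ≤ u := by omega
      have hpu : (0:ℕ) < 2^u := Nat.pow_pos (by norm_num)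
      have hut : 2^u * 2^t = 2^m := by rw [← pow_add, show u + t = m from by omega]
      have hdecomp : j * 2^t = 2^m * (j / 2^u) + (j % 2^u) * 2^t := by
        conv_lhs => rw [← Nat.div_add_mod j (2^u)]
        rw [add_mul, mul_comm (2^u) (j / 2^u), mul_assoc, hut, mul_comm (j / 2^u) (2^m)]
      have h5 : j * 2^t ≡ j / 2^u + (j % 2^u) * 2^t [MOD 2^m - 1] := by
        rw [hdecomp]
        calc 2^m * (j / 2^u) + (j % 2^u) * 2^t
            ≡ 1 * (j / 2^u) + (j % 2^u) * 2^t [MOD 2^m - 1] :=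
              (hmod.mul_right _).add_right _
          _ = j / 2^u + (j % 2^u) * 2^t := by rw [one_mul]
      have h6 : i + 2^h ≡ j / 2^u + (j % 2^u) * 2^t [MOD 2^m - 1] := h4.trans h5
      have hjmod : 1 ≤ j % 2^u := by
        have e8 : j % 2^u % 2 = j % 2 := Nat.mod_mod_of_dvd j (dvd_pow_self 2 (by omega))
        rw [Nat.odd_iff] at hjodd
        omega
      have hw1 : 2^t ≤ (j % 2^u) * 2^t := Nat.le_mul_of_pos_left _ (by omega)
      have hpt3 : 2^(h+1) < 2^t := Nat.pow_lt_pow_right one_lt_two (by omega)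
      have hb1 : j % 2^u ≤ 2^u - 1 := by have := Nat.mod_lt j hpu; omega
      have hb2 : (j % 2^u) * 2^t ≤ (2^u - 1) * 2^t := Nat.mul_le_mul_right _ hb1
      have e9 : (2^u - 1) * 2^t = 2^m - 2^t := by
        rw [tsub_mul, one_mul, hut]
      have hb3 : j / 2^u ≤ j := Nat.div_le_self _ _
      have hwv : j / 2^u + (j % 2^u) * 2^t < 2^m - 1 := by omega
      have heqw : i + 2^h = j / 2^u + (j % 2^u) * 2^t := by
        have := h6
        rwa [Nat.ModEq, Nat.mod_eq_of_lt hi2h, Nat.mod_eq_of_lt hwv] at this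
      have hi2h' : i + 2^h < 2^(h+1) := by omega
      have contra : i + 2^h < i + 2^h :=
        calc i + 2^h < 2^(h+1) := hi2h'
          _ < 2^t := hpt3
          _ ≤ (j % 2^u) * 2^t := hw1
          _ ≤ j / 2^u + (j % 2^u) * 2^t := Nat.le_add_left _ _
          _ = i + 2^h := heqw.symm
      exact absurd contra (lt_irrefl _)
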